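/- If β is flat and X ∈ RE(β) is a regular element of β, then β(Y,Z) ∈ B_X(V) ∩ (B_X(V))^⊥ for every Y ∈ U and every Z ∈ ker B_X; that is, the span of β(U × ker B_X) is contained in B_X(V) ∩ (B_X(V))^⊥. -/

import Mathlib

open Module Polynomial

lemma mem_range_aux {U V W : Type} [AddCommGroup U] [Module ℝ U]
    [AddCommGroup V] [Module ℝ V] [AddCommGroup W] [Module ℝ W]
    [FiniteDimensional ℝ W]
    (β : U →ₗ[ℝ] V →ₗ[ℝ] W) (X : U)
    (hreg : ∀ Z : U,
      finrank ℝ (LinearMap.range (β Z)) ≤ finrank ℝ (LinearMap.range (β X)))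
    (Y : U) (Z : V) (hZ : β X Z = 0) :
    β Y Z ∈ LinearMap.range (β X) := by
  by_contra hmem
  set R := LinearMap.range (β X) with hR
  set k := finrank ℝ R with hk
  let c : Basis (Fin k) ℝ R := finBasis ℝ R
  choose v hv using fun j => LinearMap.mem_range.mp (c j).2
  -- coe of basis is independent with span R
  have hcoe : LinearIndependent ℝ (fun j => ((c j : W))) := by
    have := c.linearIndependent.map' R.subtype R.ker_subtype
    exact this
  have hspan : Submodule.span ℝ (Set.range fun j => ((c j : W))) = R := by
    have : (Set.range fun j => ((c j : W))) = R.subtype '' Set.range c := by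
      rw [← Set.range_comp]; rfl
    rw [this, ← Submodule.map_span, c.span_eq, Submodule.map_top,
      Submodule.range_subtype]
  -- family depending on t
  set g : ℝ → Fin (k + 1) → W :=
    fun t => Fin.snoc (fun j => (c j : W) + t • β Y (v j)) (β Y Z) with hg
  have hg0 : g 0 = Fin.snoc (fun j => ((c j : W))) (β Y Z) := by
    funext j
    refine Fin.lastCases ?_ ?_ j <;> simp [hg]
  have hindep0 : LinearIndependent ℝ (g 0) := by
    rw [hg0, linearIndependent_fin_snoc]
    exact ⟨hcoe, by rw [hspan]; exact hmem⟩
  -- dual functionals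
  set S := Submodule.span ℝ (Set.range (g 0)) with hS
  let bS : Basis (Fin (k + 1)) ℝ S := Basis.span hindep0
  obtain ⟨p, hp⟩ := Submodule.exists_isCompl S
  let proj : W →ₗ[ℝ] S := S.linearProjOfIsCompl p hp
  let f : Fin (k + 1) → W →ₗ[ℝ] ℝ := fun i => bS.coord i ∘ₗ proj
  have hf : ∀ i j, f i (g 0 j) = if j = i then 1 else 0 := by
    intro i j
    have h1 : proj (g 0 j) = bS j := by
      have h2 : ((bS j : W)) = g 0 j := congrArg Subtype.val (Basis.span_apply hindep0 j)
      have := Submodule.linearProjOfIsCompl_apply_left hp (bS j)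
      rw [h2] at this
      exact this
    show bS.coord i (proj (g 0 j)) = _
    rw [h1, Basis.coord_apply, Basis.repr_self, Finsupp.single_apply]
  -- polynomial matrix
  set P : Matrix (Fin (k + 1)) (Fin (k + 1)) (Polynomial ℝ) :=
    fun i => Fin.snoc
      (fun j : Fin k => Polynomial.C (f i (c j : W))
        + Polynomial.X * Polynomial.C (f i (β Y (v j))))
      (Polynomial.C (f i (β Y Z))) with hP
  set N : ℝ → Matrix (Fin (k + 1)) (Fin (k + 1)) ℝ :=
    fun t i j => f i (g t j) with hN
  have hPN : ∀ t, (P.map (Polynomial.evalRingHom t)) = N t := by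
    intro t
    funext i j
    refine Fin.lastCases ?_ ?_ j
    · simp only [hP, hN, hg, Matrix.map, Matrix.of_apply, Fin.snoc_last]
      simp
    · intro j
      simp only [hP, hN, hg, Matrix.map, Matrix.of_apply, Fin.snoc_castSucc, eval_add,
        eval_mul, eval_C, eval_X, map_add, map_smul, smul_eq_mul]
      simp only [Polynomial.coe_evalRingHom, eval_add, eval_mul, eval_C, eval_X]
  set q : Polynomial ℝ := P.det with hq
  have hqeval : ∀ t, q.eval t = (N t).det := by
    intro t
    rw [← hPN t]
    exact RingHom.map_det (Polynomial.evalRingHom t) P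
  have hq0 : q.eval 0 = 1 := by
    rw [hqeval 0]
    have : N 0 = 1 := by
      funext i j
      rw [hN]
      simp only [hf i j, Matrix.one_apply]
      simp [eq_comm]
    rw [this, Matrix.det_one]
  have hqne : q * Polynomial.X ≠ 0 := by
    intro h
    rcases mul_eq_zero.mp h with h | h
    · rw [h] at hq0; simp at hq0
    · exact Polynomial.X_ne_zero h
  obtain ⟨t₀, ht₀⟩ := Infinite.exists_notMem_finset (q * Polynomial.X).roots.toFinset
  have ht0ne : t₀ ≠ 0 := by
    intro h
    apply ht₀
    rw [Multiset.mem_toFinset, Polynomial.mem_roots hqne]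
    simp [h, Polynomial.IsRoot]
  have hqt0 : q.eval t₀ ≠ 0 := by
    intro h
    apply ht₀
    rw [Multiset.mem_toFinset, Polynomial.mem_roots hqne]
    simp [Polynomial.IsRoot, h]
  have hdet : (N t₀).det ≠ 0 := by rw [← hqeval]; exact hqt0
  -- independence at t₀
  have hindept : LinearIndependent ℝ (g t₀) := by
    rw [Fintype.linearIndependent_iff]
    intro a ha
    have hmv : (N t₀).mulVec a = 0 := by
      funext i
      have : f i (∑ j, a j • g t₀ j) = 0 := by rw [ha]; simp
      rw [map_sum] at this
      simp only [map_smul, smul_eq_mul] at this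
      rw [Matrix.mulVec]
      simpa [dotProduct, hN, mul_comm] using this
    have := Matrix.eq_zero_of_mulVec_eq_zero hdet hmv
    intro i; rw [this]; rfl
  -- all vectors lie in range of β (X + t₀ • Y)
  set R' := LinearMap.range (β (X + t₀ • Y)) with hR'
  have hmem' : ∀ j, g t₀ j ∈ R' := by
    intro j
    refine Fin.lastCases ?_ ?_ j
    · refine ⟨t₀⁻¹ • Z, ?_⟩
      simp only [map_add, map_smul, LinearMap.add_apply, LinearMap.smul_apply,
        hZ, hg, Fin.snoc_last]
      rw [smul_add, smul_smul, inv_mul_cancel₀ ht0ne, smul_zero]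
      simp
    · intro j
      refine ⟨v j, ?_⟩
      simp only [map_add, map_smul, LinearMap.add_apply, LinearMap.smul_apply,
        hg, Fin.snoc_castSucc, hv j]
  -- contradiction with regularity
  let g' : Fin (k + 1) → R' := fun j => ⟨g t₀ j, hmem' j⟩
  have hindep' : LinearIndependent ℝ g' := by
    apply LinearIndependent.of_comp R'.subtype
    exact hindept
  have hcard := hindep'.fintype_card_le_finrank
  rw [Fintype.card_fin] at hcard
  have h2 := hreg (X + t₀ • Y)
  rw [← hR'] at h2
  omega

/-- If β is flat and X is a regular element, then
β(Y,Z) ∈ B_X(V) ∩ (B_X(V))^⊥ for every Y ∈ U and Z ∈ ker B_X. -/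
theorem stmt_3
    {U : Type} [AddCommGroup U] [Module ℝ U] [FiniteDimensional ℝ U]
    {V : Type} [AddCommGroup V] [Module ℝ V] [FiniteDimensional ℝ V]
    {W : Type} [AddCommGroup W] [Module ℝ W] [FiniteDimensional ℝ W]
    (b : LinearMap.BilinForm ℝ W) (hbsymm : ∀ ξ η, b ξ η = b η ξ)
    (hbnd : b.Nondegenerate)
    (β : U →ₗ[ℝ] V →ₗ[ℝ] W)
    (hflat : ∀ (X Z : U) (Y T : V), b (β X Y) (β Z T) = b (β X T) (β Z Y))
    (X : U)
    (hreg : ∀ Z : U,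
      finrank ℝ (LinearMap.range (β Z)) ≤ finrank ℝ (LinearMap.range (β X))) :
    ∀ (Y : U) (Z : V), β X Z = 0 →
      β Y Z ∈ LinearMap.range (β X) ⊓ b.orthogonal (LinearMap.range (β X)) := by
  intro Y Z hZ
  refine Submodule.mem_inf.mpr ⟨mem_range_aux β X hreg Y Z hZ, ?_⟩
  rw [LinearMap.BilinForm.mem_orthogonal_iff]
  rintro n ⟨T, rfl⟩
  show b (β X T) (β Y Z) = 0
  rw [hflat X Y T Z, hZ]
  simp
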